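/- Jacobi's triple product identity: for every real number t with 0 < t < 1 and every nonzero complex number z, the absolutely convergent sum and product satisfy ∑_{k∈ℤ} t^{k²/2} z^k = ∏_{n=1}^{∞} (1 + t^{n−1/2} z)(1 + t^{n−1/2} z^{−1})(1 − t^n). -/

import Mathlib

open Finset Filter Topology

noncomputable def JTpp (t : ℝ) (n : ℕ) : ℝ := ∏ j ∈ Finset.range n, (1 - t ^ (j + 1))

noncomputable def JTG (t : ℝ) (m : ℕ) (r : ℤ) : ℝ :=
  if 0 ≤ r ∧ r ≤ m then JTpp t m / (JTpp t r.toNat * JTpp t (m - r.toNat)) else 0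

noncomputable def JTf (t : ℝ) (z : ℂ) (N : ℕ) (k : ℤ) : ℂ :=
  ((JTG t (2 * N) ((N : ℤ) + k) * t ^ ((k : ℝ) ^ 2 / 2) : ℝ) : ℂ) * z ^ k


lemma JTpp_pos {t : ℝ} (ht0 : 0 < t) (ht1 : t < 1) (n : ℕ) : 0 < JTpp t n := by
  apply Finset.prod_pos
  intro j _
  have : t ^ (j+1) < 1 := pow_lt_one₀ ht0.le ht1 (Nat.succ_ne_zero j)
  linarith

lemma JTpp_le_one {t : ℝ} (ht0 : 0 < t) (ht1 : t < 1) (n : ℕ) : JTpp t n ≤ 1 := by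
  apply Finset.prod_le_one
  · intro j _
    have : t ^ (j+1) < 1 := pow_lt_one₀ ht0.le ht1 (Nat.succ_ne_zero j)
    linarith
  · intro j _
    have : 0 < t ^ (j+1) := pow_pos ht0 _
    linarith

lemma JTpp_succ (t : ℝ) (n : ℕ) : JTpp t (n + 1) = JTpp t n * (1 - t ^ (n + 1)) := by
  simp [JTpp, Finset.prod_range_succ]

lemma JTpp_antitone {t : ℝ} (ht0 : 0 < t) (ht1 : t < 1) : Antitone (JTpp t) := by
  apply antitone_nat_of_succ_le
  intro n
  rw [JTpp_succ]
  have h1 : 0 < t ^ (n+1) := pow_pos ht0 _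
  nlinarith [JTpp_pos ht0 ht1 n]

lemma JTG_nonneg {t : ℝ} (ht0 : 0 < t) (ht1 : t < 1) (m : ℕ) (r : ℤ) : 0 ≤ JTG t m r := by
  unfold JTG
  split
  · exact div_nonneg (JTpp_pos ht0 ht1 m).le
      (mul_pos (JTpp_pos ht0 ht1 _) (JTpp_pos ht0 ht1 _)).le
  · exact le_refl 0

lemma JTG_neg (t : ℝ) (m : ℕ) {r : ℤ} (h : r < 0) : JTG t m r = 0 := if_neg (by omega)

lemma JTG_gt (t : ℝ) (m : ℕ) {r : ℤ} (h : (m : ℤ) < r) : JTG t m r = 0 := if_neg (by omega)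

lemma JTG_nat (t : ℝ) {m j : ℕ} (h : j ≤ m) :
    JTG t m j = JTpp t m / (JTpp t j * JTpp t (m - j)) := by
  unfold JTG
  rw [if_pos ⟨Int.ofNat_nonneg j, by exact_mod_cast h⟩]
  simp

lemma JTG_pascal1 {t : ℝ} (ht0 : 0 < t) (ht1 : t < 1) (m : ℕ) (r : ℤ) :
    JTG t (m + 1) r = JTG t m (r - 1) + t ^ r * JTG t m r := by
  have hp := fun n => (JTpp_pos ht0 ht1 n).ne'
  have hne : ∀ n : ℕ, (1:ℝ) - t ^ (n+1) ≠ 0 := fun n => by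
    have := pow_lt_one₀ ht0.le ht1 (by omega : n + 1 ≠ 0); intro h; linarith
  rcases lt_or_ge r 0 with hr | hr
  · rw [JTG_neg t _ hr, JTG_neg t _ (by omega), JTG_neg t _ hr]; ring
  obtain ⟨j, rfl⟩ := Int.eq_ofNat_of_zero_le hr
  rcases Nat.lt_or_ge (m + 1) j with hj | hj
  · rw [JTG_gt t _ (by exact_mod_cast hj), JTG_gt t m (by push_cast; omega),
      JTG_gt t m (by push_cast; omega)]
    ring
  -- j ≤ m + 1
  rcases Nat.eq_zero_or_pos j with rfl | hj1
  · rw [JTG_neg t m (by norm_num)]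
    rw [JTG_nat t (Nat.zero_le _), JTG_nat t (Nat.zero_le m)]
    simp only [Nat.sub_zero, Nat.cast_zero, zpow_zero, JTpp, Finset.range_zero,
      Finset.prod_empty, one_mul]
    rw [div_self, div_self] <;> [skip; exact hp m; exact hp (m+1)]
    ring
  rcases Nat.eq_or_lt_of_le hj with rfl | hjm
  · -- j = m + 1
    rw [JTG_nat t (le_refl (m+1)),
      show ((m + 1 : ℕ) : ℤ) - 1 = ((m : ℕ) : ℤ) by push_cast; ring,
      JTG_nat t (le_refl m),
      JTG_gt t m (by exact_mod_cast Nat.lt_succ_self m)]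
    simp only [Nat.sub_self, JTpp, Finset.range_zero, Finset.prod_empty, mul_one]
    rw [div_self, div_self] <;> [skip; exact hp m; exact hp (m+1)]
    ring
  -- 1 ≤ j ≤ m
  have hjm' : j ≤ m := by omega
  obtain ⟨i, rfl⟩ : ∃ i, j = i + 1 := ⟨j - 1, by omega⟩
  obtain ⟨l, rfl⟩ : ∃ l, m = i + 1 + l := ⟨m - (i+1), by omega⟩
  rw [JTG_nat t (by omega), show ((i + 1 : ℕ) : ℤ) - 1 = ((i : ℕ) : ℤ) by push_cast; ring,
    JTG_nat t (by omega : i ≤ i + 1 + l), JTG_nat t (by omega : i + 1 ≤ i + 1 + l),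
    show ((i+1+l) + 1) - (i+1) = l + 1 by omega,
    show (i+1+l) - i = l + 1 by omega,
    show (i+1+l) - (i+1) = l by omega,
    show (i+1+l) + 1 = (i+1+l) + 1 from rfl,
    JTpp_succ t (i+1+l), show i + 1 + l = (i + l) + 1 by ring]
  rw [show ((i+1 : ℕ) : ℤ) = ((i+1 : ℕ) : ℤ) from rfl, zpow_natCast]
  rw [JTpp_succ t (i + l), show (i + l) + 1 = i + (l + 1) by ring]
  rw [JTpp_succ t i, JTpp_succ t l]
  field_simp [hp (i+l), hp i, hp l, hne i, hne l, hne (i+l), hne (i+l+1), hne (i + (l+1))]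
  ring

lemma JTG_pascal2 {t : ℝ} (ht0 : 0 < t) (ht1 : t < 1) (m : ℕ) (r : ℤ) :
    JTG t (m + 1) r = t ^ ((m : ℤ) + 1 - r) * JTG t m (r - 1) + JTG t m r := by
  have hp := fun n => (JTpp_pos ht0 ht1 n).ne'
  have hne : ∀ n : ℕ, (1:ℝ) - t ^ (n+1) ≠ 0 := fun n => by
    have := pow_lt_one₀ ht0.le ht1 (by omega : n + 1 ≠ 0); intro h; linarith
  rcases lt_or_ge r 0 with hr | hr
  · rw [JTG_neg t _ hr, JTG_neg t _ (by omega), JTG_neg t _ hr]; ring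
  obtain ⟨j, rfl⟩ := Int.eq_ofNat_of_zero_le hr
  rcases Nat.lt_or_ge (m + 1) j with hj | hj
  · rw [JTG_gt t _ (by exact_mod_cast hj), JTG_gt t m (by push_cast; omega),
      JTG_gt t m (by push_cast; omega)]
    ring
  rcases Nat.eq_zero_or_pos j with rfl | hj1
  · rw [JTG_nat t (Nat.zero_le _), JTG_nat t (Nat.zero_le m), JTG_neg t m (by norm_num)]
    simp only [Nat.sub_zero, Nat.cast_zero, JTpp, Finset.range_zero,
      Finset.prod_empty, one_mul]
    rw [div_self, div_self] <;> [skip; exact hp m; exact hp (m+1)]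
    ring
  rcases Nat.eq_or_lt_of_le hj with rfl | hjm
  · rw [JTG_nat t (le_refl (m+1)),
      show ((m + 1 : ℕ) : ℤ) - 1 = ((m : ℕ) : ℤ) by push_cast; ring,
      JTG_nat t (le_refl m),
      JTG_gt t m (by exact_mod_cast Nat.lt_succ_self m)]
    simp only [Nat.sub_self, JTpp, Finset.range_zero, Finset.prod_empty, mul_one]
    rw [div_self, div_self] <;> [skip; exact hp m; exact hp (m+1)]
    rw [show ((m:ℤ) + 1 - ((m+1 : ℕ) : ℤ)) = 0 by push_cast; ring]
    norm_num
  have hjm' : j ≤ m := by omega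
  obtain ⟨i, rfl⟩ : ∃ i, j = i + 1 := ⟨j - 1, by omega⟩
  obtain ⟨l, rfl⟩ : ∃ l, m = i + 1 + l := ⟨m - (i+1), by omega⟩
  rw [JTG_nat t (by omega), show ((i + 1 : ℕ) : ℤ) - 1 = ((i : ℕ) : ℤ) by push_cast; ring,
    JTG_nat t (by omega : i ≤ i + 1 + l), JTG_nat t (by omega : i + 1 ≤ i + 1 + l),
    show ((i+1+l) + 1) - (i+1) = l + 1 by omega,
    show (i+1+l) - i = l + 1 by omega,
    show (i+1+l) - (i+1) = l by omega,
    show ((i+1+l : ℕ) : ℤ) + 1 - ((i+1 : ℕ) : ℤ) = ((l+1 : ℕ) : ℤ) by push_cast; ring,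
    zpow_natCast,
    JTpp_succ t (i+1+l), show i + 1 + l = (i + l) + 1 by ring]
  rw [JTpp_succ t (i + l), show (i + l) + 1 = i + (l + 1) by ring]
  rw [JTpp_succ t i, JTpp_succ t l]
  field_simp [hp (i+l), hp i, hp l, hne i, hne l, hne (i+l), hne (i+l+1), hne (i + (l+1))]
  ring

lemma JTG_double {t : ℝ} (ht0 : 0 < t) (ht1 : t < 1) (m : ℕ) (r : ℤ) :
    JTG t (m + 2) r = t ^ ((m : ℤ) + 2 - r) * JTG t m (r - 2) +
      (1 + t ^ (m + 1)) * JTG t m (r - 1) + t ^ r * JTG t m r := by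
  have h1 : (t:ℝ) ^ r * t ^ ((m:ℤ) + 1 - r) = t ^ (m + 1) := by
    rw [← zpow_add₀ ht0.ne', show r + ((m:ℤ)+1-r) = ((m+1 : ℕ) : ℤ) by push_cast; ring,
      zpow_natCast]
  rw [show m + 2 = (m + 1) + 1 from rfl, JTG_pascal1 ht0 ht1 (m+1) r,
    JTG_pascal2 ht0 ht1 m (r - 1), JTG_pascal2 ht0 ht1 m r,
    show ((m:ℤ) + 1 - (r - 1)) = ((m:ℤ) + 2 - r) by ring,
    show r - 1 - 1 = r - 2 by ring]
  linear_combination (JTG t m (r-1)) * h1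

lemma JTexp1 {t : ℝ} (ht0 : 0 < t) (N : ℕ) (k : ℤ) :
    t ^ ((N : ℤ) + 1 - k) * t ^ ((k : ℝ) ^ 2 / 2) =
      t ^ ((2 * (N : ℝ) + 1) / 2) * t ^ (((k - 1 : ℤ) : ℝ) ^ 2 / 2) := by
  rw [← Real.rpow_intCast t ((N : ℤ) + 1 - k), ← Real.rpow_add ht0, ← Real.rpow_add ht0]
  congr 1
  push_cast
  ring

lemma JTexp2 {t : ℝ} (ht0 : 0 < t) (N : ℕ) (k : ℤ) :
    t ^ ((N : ℤ) + 1 + k) * t ^ ((k : ℝ) ^ 2 / 2) =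
      t ^ ((2 * (N : ℝ) + 1) / 2) * t ^ (((k + 1 : ℤ) : ℝ) ^ 2 / 2) := by
  rw [← Real.rpow_intCast t ((N : ℤ) + 1 + k), ← Real.rpow_add ht0, ← Real.rpow_add ht0]
  congr 1
  push_cast
  ring

lemma JTkey {t : ℝ} (ht0 : 0 < t) (ht1 : t < 1) {z : ℂ} (hz : z ≠ 0) (N : ℕ) (k : ℤ) :
    JTf t z (N + 1) k =
      (1 + ((t ^ (2 * N + 1) : ℝ) : ℂ)) * JTf t z N k +
      ((t ^ ((2 * (N : ℝ) + 1) / 2) : ℝ) : ℂ) * z * JTf t z N (k - 1) +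
      ((t ^ ((2 * (N : ℝ) + 1) / 2) : ℝ) : ℂ) * z⁻¹ * JTf t z N (k + 1) := by
  have hd := JTG_double ht0 ht1 (2 * N) ((N : ℤ) + 1 + k)
  have hr : JTG t (2 * N + 2) ((N : ℤ) + 1 + k) * t ^ ((k : ℝ) ^ 2 / 2) =
      (1 + t ^ (2 * N + 1)) * (JTG t (2 * N) ((N : ℤ) + k) * t ^ ((k : ℝ) ^ 2 / 2)) +
      t ^ ((2 * (N : ℝ) + 1) / 2) *
        (JTG t (2 * N) ((N : ℤ) + (k - 1)) * t ^ (((k - 1 : ℤ) : ℝ) ^ 2 / 2)) +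
      t ^ ((2 * (N : ℝ) + 1) / 2) *
        (JTG t (2 * N) ((N : ℤ) + 1 + k) * t ^ (((k + 1 : ℤ) : ℝ) ^ 2 / 2)) := by
    have e1 := JTexp1 ht0 N k
    have e2 := JTexp2 ht0 N k
    rw [show ((N : ℤ) + 1 + k) - 2 = (N : ℤ) + (k - 1) by ring,
      show ((N : ℤ) + 1 + k) - 1 = (N : ℤ) + k by ring,
      show ((2 * N : ℕ) : ℤ) + 2 - ((N : ℤ) + 1 + k) = (N : ℤ) + 1 - k by push_cast; ring] at hd
    calc JTG t (2 * N + 2) ((N : ℤ) + 1 + k) * t ^ ((k : ℝ) ^ 2 / 2)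
        = (t ^ ((N : ℤ) + 1 - k) * JTG t (2 * N) ((N : ℤ) + (k - 1)) +
            (1 + t ^ (2 * N + 1)) * JTG t (2 * N) ((N : ℤ) + k) +
            t ^ ((N : ℤ) + 1 + k) * JTG t (2 * N) ((N : ℤ) + 1 + k)) *
            t ^ ((k : ℝ) ^ 2 / 2) := by rw [hd]
      _ = _ := by
            rw [add_mul, add_mul]
            rw [show t ^ ((N : ℤ) + 1 - k) * JTG t (2 * N) ((N : ℤ) + (k - 1)) *
                t ^ ((k : ℝ) ^ 2 / 2) = (t ^ ((N : ℤ) + 1 - k) * t ^ ((k : ℝ) ^ 2 / 2)) *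
                JTG t (2 * N) ((N : ℤ) + (k - 1)) by ring,
              show t ^ ((N : ℤ) + 1 + k) * JTG t (2 * N) ((N : ℤ) + 1 + k) *
                t ^ ((k : ℝ) ^ 2 / 2) = (t ^ ((N : ℤ) + 1 + k) * t ^ ((k : ℝ) ^ 2 / 2)) *
                JTG t (2 * N) ((N : ℤ) + 1 + k) by ring, e1, e2]
            ring
  have hz1 : z ^ (k - 1) = z ^ k * z⁻¹ := zpow_sub_one₀ hz k
  have hz2 : z ^ (k + 1) = z ^ k * z := zpow_add_one₀ hz k
  have hC := congrArg (Complex.ofReal) hr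
  push_cast at hC
  unfold JTf
  rw [show 2 * (N + 1) = 2 * N + 2 by ring, show ((N + 1 : ℕ) : ℤ) + k = (N : ℤ) + 1 + k by
    push_cast; ring, show (N : ℤ) + (k + 1) = (N : ℤ) + 1 + k by ring]
  rw [hz1, hz2]
  push_cast
  field_simp
  linear_combination hC



lemma JTf_eq_zero (t : ℝ) (z : ℂ) (N : ℕ) :
    ∀ k ∉ Finset.Icc (-(N : ℤ)) (N : ℤ), JTf t z N k = 0 := by
  intro k hk
  simp only [Finset.mem_Icc, not_and_or, not_le] at hk
  unfold JTf
  rcases hk with h | h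
  · rw [JTG_neg t _ (by omega)]; simp
  · rw [JTG_gt t _ (by push_cast; omega)]; simp

lemma JTf_summable (t : ℝ) (z : ℂ) (N : ℕ) : Summable (JTf t z N) :=
  summable_of_ne_finset_zero (JTf_eq_zero t z N)

lemma JTFI {t : ℝ} (ht0 : 0 < t) (ht1 : t < 1) {z : ℂ} (hz : z ≠ 0) (N : ℕ) :
    ∑' k : ℤ, JTf t z N k = ∏ n ∈ Finset.range N,
      ((1 + ((t ^ (((n : ℝ) + 1) - 1 / 2) : ℝ) : ℂ) * z) *
       (1 + ((t ^ (((n : ℝ) + 1) - 1 / 2) : ℝ) : ℂ) * z⁻¹)) := by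
  induction N with
  | zero =>
      rw [tsum_eq_sum (s := Finset.Icc (-(0 : ℤ)) (0 : ℤ)) (JTf_eq_zero t z 0)]
      simp only [Finset.range_zero, Finset.prod_empty]
      rw [show Finset.Icc (-(0 : ℤ)) (0 : ℤ) = {0} by rfl, Finset.sum_singleton]
      unfold JTf JTG
      norm_num [JTpp]
  | succ N ih =>
      have S := JTf_summable t z N
      have S1 : Summable (fun k : ℤ => JTf t z N (k - 1)) :=
        summable_of_ne_finset_zero (s := Finset.Icc (-(N : ℤ) - 1) ((N : ℤ) + 1))
          (fun k hk => JTf_eq_zero t z N (k - 1) (by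
            simp only [Finset.mem_Icc] at *; omega))
      have S2 : Summable (fun k : ℤ => JTf t z N (k + 1)) :=
        summable_of_ne_finset_zero (s := Finset.Icc (-(N : ℤ) - 1) ((N : ℤ) + 1))
          (fun k hk => JTf_eq_zero t z N (k + 1) (by
            simp only [Finset.mem_Icc] at *; omega))
      have h1 : ∑' k : ℤ, JTf t z N (k - 1) = ∑' k : ℤ, JTf t z N k := by
        simpa using (Equiv.subRight (1 : ℤ)).tsum_eq (JTf t z N)
      have h2 : ∑' k : ℤ, JTf t z N (k + 1) = ∑' k : ℤ, JTf t z N k := by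
        simpa using (Equiv.addRight (1 : ℤ)).tsum_eq (JTf t z N)
      calc ∑' k : ℤ, JTf t z (N + 1) k
          = ∑' k : ℤ, ((1 + ((t ^ (2 * N + 1) : ℝ) : ℂ)) * JTf t z N k +
              ((t ^ ((2 * (N : ℝ) + 1) / 2) : ℝ) : ℂ) * z * JTf t z N (k - 1) +
              ((t ^ ((2 * (N : ℝ) + 1) / 2) : ℝ) : ℂ) * z⁻¹ * JTf t z N (k + 1)) :=
            tsum_congr (fun k => JTkey ht0 ht1 hz N k)
        _ = (1 + ((t ^ (2 * N + 1) : ℝ) : ℂ)) * ∑' k : ℤ, JTf t z N k +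
              ((t ^ ((2 * (N : ℝ) + 1) / 2) : ℝ) : ℂ) * z * ∑' k : ℤ, JTf t z N (k - 1) +
              ((t ^ ((2 * (N : ℝ) + 1) / 2) : ℝ) : ℂ) * z⁻¹ *
                ∑' k : ℤ, JTf t z N (k + 1) := by
            rw [Summable.tsum_add (Summable.add (S.mul_left _) (S1.mul_left _)) (S2.mul_left _),
              Summable.tsum_add (S.mul_left _) (S1.mul_left _), tsum_mul_left, tsum_mul_left,
              tsum_mul_left]
        _ = (∑' k : ℤ, JTf t z N k) *
              ((1 + ((t ^ ((2 * (N : ℝ) + 1) / 2) : ℝ) : ℂ) * z) *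
               (1 + ((t ^ ((2 * (N : ℝ) + 1) / 2) : ℝ) : ℂ) * z⁻¹)) := by
            rw [h1, h2]
            have hW : ((t ^ ((2 * (N : ℝ) + 1) / 2) : ℝ) : ℂ) *
                ((t ^ ((2 * (N : ℝ) + 1) / 2) : ℝ) : ℂ) = ((t ^ (2 * N + 1) : ℝ) : ℂ) := by
              have he : (2 * (N:ℝ) + 1) / 2 + (2 * (N:ℝ) + 1) / 2 = ((2*N+1 : ℕ) : ℝ) := by
                push_cast; ring
              rw [← Complex.ofReal_mul, ← Real.rpow_add ht0, he, Real.rpow_natCast]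
            have hzz : z * z⁻¹ = 1 := mul_inv_cancel₀ hz
            linear_combination (-(∑' k : ℤ, JTf t z N k)) * hW -
              (∑' k : ℤ, JTf t z N k) * (((t ^ ((2 * (N : ℝ) + 1) / 2) : ℝ) : ℂ) *
                ((t ^ ((2 * (N : ℝ) + 1) / 2) : ℝ) : ℂ)) * hzz
        _ = ∏ n ∈ Finset.range (N + 1),
              ((1 + ((t ^ (((n : ℝ) + 1) - 1 / 2) : ℝ) : ℂ) * z) *
               (1 + ((t ^ (((n : ℝ) + 1) - 1 / 2) : ℝ) : ℂ) * z⁻¹)) := by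
            rw [Finset.prod_range_succ, ← ih,
              show ((N : ℝ) + 1) - 1 / 2 = (2 * (N : ℝ) + 1) / 2 by ring]

lemma JTsummable_nat {t : ℝ} (ht0 : 0 < t) (ht1 : t < 1) {r : ℝ} (hr : 0 < r) :
    Summable (fun n : ℕ => t ^ ((n : ℝ) ^ 2 / 2) * r ^ n) := by
  have hpos : ∀ n : ℕ, 0 < t ^ ((n : ℝ) ^ 2 / 2) * r ^ n := fun n =>
    mul_pos (Real.rpow_pos_of_pos ht0 _) (pow_pos hr n)
  apply summable_of_ratio_test_tendsto_lt_one (l := 0) one_pos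
    (Eventually.of_forall fun n => (hpos n).ne')
  have key : ∀ n : ℕ, ‖t ^ (((n+1 : ℕ) : ℝ) ^ 2 / 2) * r ^ (n+1)‖ / ‖t ^ ((n : ℝ) ^ 2 / 2) * r ^ n‖
      = t ^ (n : ℕ) * (t ^ ((1:ℝ)/2) * r) := by
    intro n
    rw [Real.norm_of_nonneg (hpos (n+1)).le, Real.norm_of_nonneg (hpos n).le]
    have hx : t ^ (((n+1 : ℕ) : ℝ) ^ 2 / 2) =
        t ^ ((n : ℝ) ^ 2 / 2) * (t ^ (n : ℕ) * t ^ ((1:ℝ)/2)) := by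
      rw [← Real.rpow_natCast t n, ← Real.rpow_add ht0, ← Real.rpow_add ht0]
      congr 1
      push_cast
      ring
    rw [hx, pow_succ]
    field_simp
    ring
  have : Tendsto (fun n : ℕ => t ^ n * (t ^ ((1:ℝ)/2) * r)) atTop (𝓝 0) := by
    simpa using (tendsto_pow_atTop_nhds_zero_of_lt_one ht0.le ht1).mul_const
      (t ^ ((1:ℝ)/2) * r)
  exact this.congr fun n => (key n).symm

lemma JTsummable_norm {t : ℝ} (ht0 : 0 < t) (ht1 : t < 1) {z : ℂ} (hz : z ≠ 0) :
    Summable (fun k : ℤ => ‖((t ^ ((k : ℝ) ^ 2 / 2) : ℝ) : ℂ) * z ^ k‖) := by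
  set r : ℝ := max ‖z‖ ‖z⁻¹‖ with hrdef
  have hr : 0 < r := lt_max_of_lt_left (norm_pos_iff.2 hz)
  have hzk : ∀ k : ℤ, ‖z ^ k‖ ≤ r ^ k.natAbs := by
    intro k
    cases k with
    | ofNat n =>
        rw [Int.ofNat_eq_coe, zpow_natCast, norm_pow]
        exact pow_le_pow_left₀ (norm_nonneg z) (le_max_left _ _) n
    | negSucc n =>
        rw [zpow_negSucc, ← inv_pow, norm_pow]
        exact pow_le_pow_left₀ (norm_nonneg _) (le_max_right _ _) _
  have hb : Summable (fun k : ℤ => t ^ ((k : ℝ) ^ 2 / 2) * r ^ k.natAbs) := by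
    apply Summable.of_nat_of_neg (f := fun k : ℤ => t ^ ((k : ℝ) ^ 2 / 2) * r ^ k.natAbs)
    · apply (JTsummable_nat ht0 ht1 hr).congr
      intro n; norm_num
    · apply (JTsummable_nat ht0 ht1 hr).congr
      intro n
      simp only [Int.cast_neg, Int.cast_natCast, Int.natAbs_neg, Int.natAbs_natCast]
      rw [neg_sq]
  apply Summable.of_nonneg_of_le (fun k => norm_nonneg _) ?_ hb
  intro k
  rw [norm_mul, Complex.norm_real, Real.norm_of_nonneg (Real.rpow_nonneg ht0.le _)]
  exact mul_le_mul_of_nonneg_left (hzk k) (Real.rpow_nonneg ht0.le _)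

lemma JT_hasProd_zero {u : ℕ → ℂ} (n0 : ℕ) (h : u n0 = 0) : HasProd u 0 := by
  unfold HasProd
  apply Tendsto.congr' (f₁ := fun _ => (0 : ℂ)) _ tendsto_const_nhds
  symm
  rw [EventuallyEq, SummationFilter.unconditional_filter, eventually_atTop]
  exact ⟨{n0}, fun s hs => Finset.prod_eq_zero (hs (Finset.mem_singleton_self n0)) h⟩

lemma JTmultipliable {u : ℕ → ℂ} (hu : Summable (fun n => ‖u n‖)) :
    Multipliable (fun n => 1 + u n) := by
  by_cases hex : ∃ n, 1 + u n = 0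
  · obtain ⟨n0, hn0⟩ := hex
    exact ⟨0, JT_hasProd_zero n0 hn0⟩
  push_neg at hex
  have hlog : Summable (fun n => Complex.log (1 + u n)) := by
    apply Summable.of_norm_bounded_eventually (g := fun n => 3/2 * ‖u n‖) (hu.mul_left _)
    rw [Nat.cofinite_eq_atTop]
    have : Tendsto (fun n => ‖u n‖) atTop (𝓝 0) := hu.tendsto_atTop_zero
    filter_upwards [this.eventually_le_const (by norm_num : (0:ℝ) < 1/2)] with n hn
    exact Complex.norm_log_one_add_half_le_self (by simpa using hn)
  exact Complex.multipliable_of_summable_log hlog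

lemma JTsummable_log {t : ℝ} (ht0 : 0 < t) (ht1 : t < 1) :
    Summable (fun n : ℕ => Real.log (1 - t ^ (n + 1))) := by
  have hx : ∀ n : ℕ, 0 < 1 - t ^ (n + 1) := fun n => by
    have := pow_lt_one₀ ht0.le ht1 (by omega : n + 1 ≠ 0); linarith
  have hxt : ∀ n : ℕ, t ^ (n + 1) ≤ t := fun n => by
    calc t ^ (n + 1) ≤ t ^ 1 := pow_le_pow_of_le_one ht0.le ht1.le (by omega)
    _ = t := pow_one t
  apply Summable.of_norm_bounded (g := fun n : ℕ => ((1 - t)⁻¹ * t) * t ^ n)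
  · exact (summable_geometric_of_lt_one ht0.le ht1).mul_left _
  intro n
  have h1 : Real.log (1 - t ^ (n + 1)) ≤ 0 := Real.log_nonpos (hx n).le (by
    have := pow_pos ht0 (n+1); linarith)
  rw [Real.norm_of_nonpos h1, ← Real.log_inv]
  have h2 : Real.log (1 - t ^ (n + 1))⁻¹ ≤ (1 - t ^ (n + 1))⁻¹ - 1 :=
    Real.log_le_sub_one_of_pos (inv_pos.2 (hx n))
  have h3 : (1 - t ^ (n + 1))⁻¹ - 1 = t ^ (n + 1) / (1 - t ^ (n + 1)) := by
    field_simp [(hx n).ne']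
    ring
  have h4 : t ^ (n + 1) / (1 - t ^ (n + 1)) ≤ t ^ (n + 1) / (1 - t) := by
    apply div_le_div_of_nonneg_left (pow_pos ht0 _).le (by linarith) (by
      have := hxt n; linarith)
  calc Real.log (1 - t ^ (n + 1))⁻¹ ≤ t ^ (n + 1) / (1 - t) := by linarith
    _ = (1 - t)⁻¹ * t * t ^ n := by rw [pow_succ]; ring

lemma JTmult_real {t : ℝ} (ht0 : 0 < t) (ht1 : t < 1) :
    Multipliable (fun n : ℕ => (1 - t ^ (n + 1))) := by
  have hx : ∀ (_ : Unit) (n : ℕ), 0 < 1 - t ^ (n + 1) := fun _ n => by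
    have := pow_lt_one₀ ht0.le ht1 (by omega : n + 1 ≠ 0); linarith
  exact Real.multipliable_of_summable_log (hx ()) (JTsummable_log ht0 ht1)

lemma JTL_pos {t : ℝ} (ht0 : 0 < t) (ht1 : t < 1) :
    0 < ∏' n : ℕ, (1 - t ^ (n + 1)) := by
  have hx : ∀ (_ : Unit) (n : ℕ), 0 < 1 - t ^ (n + 1) := fun _ n => by
    have := pow_lt_one₀ ht0.le ht1 (by omega : n + 1 ≠ 0); linarith
  have := Real.rexp_tsum_eq_tprod (hx ()) (JTsummable_log ht0 ht1)
  rw [← this]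
  exact Real.exp_pos _

lemma JTL_tendsto {t : ℝ} (ht0 : 0 < t) (ht1 : t < 1) :
    Filter.Tendsto (JTpp t) atTop (𝓝 (∏' n : ℕ, (1 - t ^ (n + 1)))) :=
  (JTmult_real ht0 ht1).hasProd.tendsto_prod_nat

lemma JTL_le {t : ℝ} (ht0 : 0 < t) (ht1 : t < 1) (n : ℕ) :
    (∏' n : ℕ, (1 - t ^ (n + 1))) ≤ JTpp t n :=
  le_of_tendsto (JTL_tendsto ht0 ht1)
    (eventually_atTop.2 ⟨n, fun m hm => JTpp_antitone ht0 ht1 hm⟩)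

lemma JTG_le {t : ℝ} (ht0 : 0 < t) (ht1 : t < 1) (m : ℕ) (r : ℤ) :
    JTG t m r ≤ ((∏' n : ℕ, (1 - t ^ (n + 1))) * (∏' n : ℕ, (1 - t ^ (n + 1))))⁻¹ := by
  set L := ∏' n : ℕ, (1 - t ^ (n + 1)) with hL
  have hLpos := JTL_pos ht0 ht1
  unfold JTG
  split
  · rw [← one_div]
    exact div_le_div₀ (by norm_num) (JTpp_le_one ht0 ht1 m) (by positivity)
      (mul_le_mul (JTL_le ht0 ht1 _) (JTL_le ht0 ht1 _) hLpos.le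
        (JTpp_pos ht0 ht1 _).le)
  · positivity

lemma JTptw {t : ℝ} (ht0 : 0 < t) (ht1 : t < 1) (k : ℤ) :
    Filter.Tendsto (fun N : ℕ => JTpp t N * JTG t (2 * N) ((N : ℤ) + k)) atTop (𝓝 1) := by
  set L := ∏' n : ℕ, (1 - t ^ (n + 1)) with hL
  have hLpos := JTL_pos ht0 ht1
  have h2N : Tendsto (fun N : ℕ => JTpp t (2 * N)) atTop (𝓝 L) :=
    (JTL_tendsto ht0 ht1).comp (tendsto_atTop.2 fun b =>
      eventually_atTop.2 ⟨b, fun N hN => by omega⟩)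
  have hA : Tendsto (fun N : ℕ => JTpp t ((N : ℤ) + k).toNat) atTop (𝓝 L) :=
    (JTL_tendsto ht0 ht1).comp (tendsto_atTop.2 fun b =>
      eventually_atTop.2 ⟨b + k.natAbs, fun N hN => by omega⟩)
  have hB : Tendsto (fun N : ℕ => JTpp t ((N : ℤ) - k).toNat) atTop (𝓝 L) :=
    (JTL_tendsto ht0 ht1).comp (tendsto_atTop.2 fun b =>
      eventually_atTop.2 ⟨b + k.natAbs, fun N hN => by omega⟩)
  have hmain : Tendsto (fun N : ℕ => JTpp t N * JTpp t (2 * N) /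
      (JTpp t ((N : ℤ) + k).toNat * JTpp t ((N : ℤ) - k).toNat)) atTop
      (𝓝 (L * L / (L * L))) :=
    ((JTL_tendsto ht0 ht1).mul h2N).div (hA.mul hB) (by positivity)
  rw [div_self (by positivity : L * L ≠ 0)] at hmain
  apply hmain.congr'
  rw [EventuallyEq, eventually_atTop]
  refine ⟨k.natAbs, fun N hN => ?_⟩
  unfold JTG
  rw [if_pos ⟨by omega, by push_cast; omega⟩]
  rw [show 2 * N - ((N : ℤ) + k).toNat = ((N : ℤ) - k).toNat by omega]
  ring
/-- Jacobi's triple product identity: for `0 < t < 1` real and `z ≠ 0` complex,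
`∑_{k ∈ ℤ} t^(k²/2) z^k = ∏_{n ≥ 1} (1 + t^(n-1/2) z)(1 + t^(n-1/2) z⁻¹)(1 - t^n)`,
the series converging absolutely and the product being (absolutely) convergent. -/
theorem jacobi_triple_product (t : ℝ) (ht0 : 0 < t) (ht1 : t < 1) (z : ℂ) (hz : z ≠ 0) :
    Summable (fun k : ℤ => ‖((t ^ ((k : ℝ) ^ 2 / 2) : ℝ) : ℂ) * z ^ k‖) ∧
    Multipliable (fun n : ℕ =>
      (1 + ((t ^ (((n : ℝ) + 1) - 1 / 2) : ℝ) : ℂ) * z) *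
      (1 + ((t ^ (((n : ℝ) + 1) - 1 / 2) : ℝ) : ℂ) * z⁻¹) *
      (1 - ((t ^ ((n : ℝ) + 1) : ℝ) : ℂ))) ∧
    ∑' k : ℤ, ((t ^ ((k : ℝ) ^ 2 / 2) : ℝ) : ℂ) * z ^ k =
      ∏' n : ℕ,
        (1 + ((t ^ (((n : ℝ) + 1) - 1 / 2) : ℝ) : ℂ) * z) *
        (1 + ((t ^ (((n : ℝ) + 1) - 1 / 2) : ℝ) : ℂ) * z⁻¹) *
        (1 - ((t ^ ((n : ℝ) + 1) : ℝ) : ℂ)) := by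
  have hLpos := JTL_pos ht0 ht1
  have P1 : Summable (fun k : ℤ => ‖((t ^ ((k : ℝ) ^ 2 / 2) : ℝ) : ℂ) * z ^ k‖) :=
    JTsummable_norm ht0 ht1 hz
  have geom : ∀ C : ℝ, Summable (fun n : ℕ => t ^ n * C) := fun C =>
    (summable_geometric_of_lt_one ht0.le ht1).mul_right C
  have hWc : ∀ n : ℕ, (t ^ (((n : ℝ) + 1) - 1 / 2) : ℝ) = t ^ (n : ℕ) * t ^ ((1 : ℝ) / 2) :=
    fun n => by
      rw [← Real.rpow_natCast t n, ← Real.rpow_add ht0]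
      congr 1
      ring
  have hcast : ∀ n : ℕ, (t ^ ((n : ℝ) + 1) : ℝ) = t ^ (n + 1 : ℕ) := fun n => by
    rw [← Real.rpow_natCast t (n + 1)]
    congr 1
    push_cast
    ring
  have M1 : Multipliable (fun n : ℕ => 1 + ((t ^ (((n : ℝ) + 1) - 1 / 2) : ℝ) : ℂ) * z) := by
    apply JTmultipliable
    apply Summable.congr (f := fun n : ℕ => t ^ n * (t ^ ((1 : ℝ) / 2) * ‖z‖)) (geom _)
    intro n
    rw [norm_mul, Complex.norm_real, Real.norm_of_nonneg (Real.rpow_nonneg ht0.le _), hWc n]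
    ring
  have M2 : Multipliable (fun n : ℕ => 1 + ((t ^ (((n : ℝ) + 1) - 1 / 2) : ℝ) : ℂ) * z⁻¹) := by
    apply JTmultipliable
    apply Summable.congr (f := fun n : ℕ => t ^ n * (t ^ ((1 : ℝ) / 2) * ‖z⁻¹‖)) (geom _)
    intro n
    rw [norm_mul, Complex.norm_real, Real.norm_of_nonneg (Real.rpow_nonneg ht0.le _), hWc n]
    ring
  have M3 : Multipliable (fun n : ℕ => 1 - ((t ^ ((n : ℝ) + 1) : ℝ) : ℂ)) := by
    have hs : Summable (fun n : ℕ => ‖-(((t ^ ((n : ℝ) + 1) : ℝ) : ℂ))‖) := by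
      apply Summable.congr (f := fun n : ℕ => t ^ n * t) (geom _)
      intro n
      rw [norm_neg, Complex.norm_real, Real.norm_of_nonneg (Real.rpow_nonneg ht0.le _),
        hcast n, pow_succ]
    exact (JTmultipliable hs).congr (fun n => by ring)
  have Mtriple := (M1.mul M2).mul M3
  refine ⟨P1, Mtriple, ?_⟩
  have hprod_eq : ∀ N : ℕ, ((JTpp t N : ℝ) : ℂ) * ∑' k : ℤ, JTf t z N k =
      ∏ n ∈ Finset.range N,
        ((1 + ((t ^ (((n : ℝ) + 1) - 1 / 2) : ℝ) : ℂ) * z) *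
         (1 + ((t ^ (((n : ℝ) + 1) - 1 / 2) : ℝ) : ℂ) * z⁻¹) *
         (1 - ((t ^ ((n : ℝ) + 1) : ℝ) : ℂ))) := by
    intro N
    rw [JTFI ht0 ht1 hz N]
    have hcpp : ((JTpp t N : ℝ) : ℂ) =
        ∏ n ∈ Finset.range N, (1 - ((t ^ ((n : ℝ) + 1) : ℝ) : ℂ)) := by
      unfold JTpp
      push_cast
      exact Finset.prod_congr rfl fun n _ => by rw [hcast n]; push_cast; ring
    rw [hcpp, ← Finset.prod_mul_distrib]
    exact Finset.prod_congr rfl fun n _ => by ring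
  have hT1 : Tendsto (fun N : ℕ => ((JTpp t N : ℝ) : ℂ) * ∑' k : ℤ, JTf t z N k) atTop
      (𝓝 (∏' n : ℕ,
        (1 + ((t ^ (((n : ℝ) + 1) - 1 / 2) : ℝ) : ℂ) * z) *
        (1 + ((t ^ (((n : ℝ) + 1) - 1 / 2) : ℝ) : ℂ) * z⁻¹) *
        (1 - ((t ^ ((n : ℝ) + 1) : ℝ) : ℂ)))) := by
    apply Tendsto.congr (fun N => (hprod_eq N).symm)
    exact Mtriple.hasProd.tendsto_prod_nat
  have hpt : ∀ k : ℤ, Tendsto (fun N : ℕ => ((JTpp t N : ℝ) : ℂ) * JTf t z N k) atTop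
      (𝓝 (((t ^ ((k : ℝ) ^ 2 / 2) : ℝ) : ℂ) * z ^ k)) := by
    intro k
    have h1 := ((Complex.continuous_ofReal.tendsto 1).comp (JTptw ht0 ht1 k)).mul_const
      (((t ^ ((k : ℝ) ^ 2 / 2) : ℝ) : ℂ) * z ^ k)
    simp only [Complex.ofReal_one, one_mul] at h1
    apply h1.congr
    intro N
    show ((JTpp t N * JTG t (2 * N) ((N : ℤ) + k) : ℝ) : ℂ) * _ = _
    unfold JTf
    push_cast
    ring
  have hbound : ∀ᶠ N in (atTop : Filter ℕ), ∀ k : ℤ,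
      ‖((JTpp t N : ℝ) : ℂ) * JTf t z N k‖ ≤
        ((∏' n : ℕ, (1 - t ^ (n + 1))) * (∏' n : ℕ, (1 - t ^ (n + 1))))⁻¹ *
          ‖((t ^ ((k : ℝ) ^ 2 / 2) : ℝ) : ℂ) * z ^ k‖ := by
    apply Eventually.of_forall
    intro N k
    unfold JTf
    rw [norm_mul, norm_mul, norm_mul, Complex.norm_real, Complex.norm_real,
      Complex.norm_real, Real.norm_of_nonneg (JTpp_pos ht0 ht1 N).le,
      Real.norm_of_nonneg (mul_nonneg (JTG_nonneg ht0 ht1 _ _) (Real.rpow_nonneg ht0.le _)),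
      Real.norm_of_nonneg (Real.rpow_nonneg ht0.le _)]
    have h1 : JTpp t N * JTG t (2 * N) ((N : ℤ) + k) ≤
        ((∏' n : ℕ, (1 - t ^ (n + 1))) * (∏' n : ℕ, (1 - t ^ (n + 1))))⁻¹ := by
      calc JTpp t N * JTG t (2 * N) ((N : ℤ) + k)
          ≤ 1 * JTG t (2 * N) ((N : ℤ) + k) :=
            mul_le_mul_of_nonneg_right (JTpp_le_one ht0 ht1 N) (JTG_nonneg ht0 ht1 _ _)
        _ = JTG t (2 * N) ((N : ℤ) + k) := one_mul _
        _ ≤ _ := JTG_le ht0 ht1 (2 * N) ((N : ℤ) + k)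
    have h2 : (0 : ℝ) ≤ t ^ ((k : ℝ) ^ 2 / 2) * ‖z ^ k‖ :=
      mul_nonneg (Real.rpow_nonneg ht0.le _) (norm_nonneg _)
    have h3 : (0 : ℝ) ≤ JTpp t N * JTG t (2 * N) ((N : ℤ) + k) :=
      mul_nonneg (JTpp_pos ht0 ht1 N).le (JTG_nonneg ht0 ht1 _ _)
    calc JTpp t N * (JTG t (2 * N) ((N : ℤ) + k) * t ^ ((k : ℝ) ^ 2 / 2) * ‖z ^ k‖)
        = (JTpp t N * JTG t (2 * N) ((N : ℤ) + k)) * (t ^ ((k : ℝ) ^ 2 / 2) * ‖z ^ k‖) := by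
          ring
      _ ≤ ((∏' n : ℕ, (1 - t ^ (n + 1))) * (∏' n : ℕ, (1 - t ^ (n + 1))))⁻¹ *
            (t ^ ((k : ℝ) ^ 2 / 2) * ‖z ^ k‖) := mul_le_mul_of_nonneg_right h1 h2
  have hT2 : Tendsto (fun N : ℕ => ((JTpp t N : ℝ) : ℂ) * ∑' k : ℤ, JTf t z N k) atTop
      (𝓝 (∑' k : ℤ, ((t ^ ((k : ℝ) ^ 2 / 2) : ℝ) : ℂ) * z ^ k)) := by
    have := tendsto_tsum_of_dominated_convergence
      (f := fun (N : ℕ) (k : ℤ) => ((JTpp t N : ℝ) : ℂ) * JTf t z N k)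
      (g := fun k : ℤ => ((t ^ ((k : ℝ) ^ 2 / 2) : ℝ) : ℂ) * z ^ k)
      (bound := fun k : ℤ =>
        ((∏' n : ℕ, (1 - t ^ (n + 1))) * (∏' n : ℕ, (1 - t ^ (n + 1))))⁻¹ *
          ‖((t ^ ((k : ℝ) ^ 2 / 2) : ℝ) : ℂ) * z ^ k‖)
      (P1.mul_left _) hpt hbound
    apply this.congr
    intro N
    exact tsum_mul_left
  exact tendsto_nhds_unique hT2 hT1
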